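/- If e is a singular idempotent transformation of {1,...,n} and h, g ∈ S_n, then the product h∘e∘g lies in the subsemigroup of T_n generated by the S_n-conjugates of e. -/

import Mathlib

/-- The full transformation monoid on `{1,...,n}`, modeled as `Function.End (Fin n)`
(multiplication is composition). -/
abbrev Tn (n : ℕ) := Function.End (Fin n)

/-- A permutation viewed as a transformation. -/
def ofPerm {n : ℕ} (g : Equiv.Perm (Fin n)) : Tn n := ⇑g

/-- The rank of a transformation: the size of its image. -/
def rnk {n : ℕ} (a : Tn n) : ℕ := (Finset.univ.image a).card

/-- The symmetric group embedded in `Tn n` as a set. -/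
def perms (n : ℕ) : Set (Tn n) := Set.range (fun g : Equiv.Perm (Fin n) => ofPerm g)

/-- The `S_n`-conjugacy class of a transformation. -/
def conjClass {n : ℕ} (t : Tn n) : Set (Tn n) :=
  {s | ∃ g : Equiv.Perm (Fin n), s = ofPerm g⁻¹ * t * ofPerm g}

namespace Stmt15Aux

open Finset Equiv

variable {n : ℕ}

lemma conj_apply (t : Tn n) (g : Equiv.Perm (Fin n)) (x : Fin n) :
    (ofPerm g⁻¹ * t * ofPerm g) x = g⁻¹ (t (g x)) := rfl

lemma self_mem_conjClass (e : Tn n) : e ∈ conjClass e :=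
  ⟨1, by funext x; rw [conj_apply]; simp⟩

/-- An injective map on a finset, into a finset of the same card, extends to a permutation. -/
lemma exists_perm_eqOn (s t : Finset (Fin n)) (φ : Fin n → Fin n)
    (hinj : Set.InjOn φ ↑s) (hmaps : ∀ z ∈ s, φ z ∈ t) (hcard : s.card = t.card) :
    ∃ g : Equiv.Perm (Fin n), ∀ z ∈ s, g z = φ z := by
  classical
  have hinj' : Function.Injective
      (fun x : {x // x ∈ s} => (⟨φ x, hmaps x x.2⟩ : {x // x ∈ t})) := by
    rintro ⟨x, hx⟩ ⟨y, hy⟩ hxy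
    simpa using hinj hx hy (by simpa using congrArg Subtype.val hxy)
  have hcard1 : Fintype.card {x // x ∈ s} = Fintype.card {x // x ∈ t} := by
    simpa [Fintype.card_coe] using hcard
  have hbij := (Fintype.bijective_iff_injective_and_card _).2 ⟨hinj', hcard1⟩
  let e1 := Equiv.ofBijective _ hbij
  have hc2 : Fintype.card {x // x ∉ s} = Fintype.card {x // x ∉ t} := by
    rw [Fintype.card_subtype_compl, Fintype.card_subtype_compl]
    simp [Fintype.card_coe, hcard]
  let e2 : {x // ¬ x ∈ s} ≃ {x // ¬ x ∈ t} := Fintype.equivOfCardEq hc2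
  refine ⟨Equiv.subtypeCongr e1 e2, fun z hz => ?_⟩
  simp [Equiv.subtypeCongr, hz, e1]

open Classical in
/-- The fixed-point set of `e` (= image of `e` when `e` is idempotent). -/
noncomputable def J (e : Tn n) : Finset (Fin n) := Finset.univ.filter (fun z => e z = z)

lemma mem_J {e : Tn n} {z : Fin n} : z ∈ J e ↔ e z = z := by simp [J]

variable {e : Tn n}

/-- Realize the identity on a set `S` of the right cardinality by a conjugate of `e`. -/
lemma realize_id (S : Finset (Fin n)) (hS : S.card = (J e).card) :
    ∃ f ∈ conjClass e, ∀ z ∈ S, f z = z := by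
  classical
  let eqv := Finset.equivOfCardEq hS
  let φ : Fin n → Fin n := fun z => if h : z ∈ S then (eqv ⟨z, h⟩ : Fin n) else z
  obtain ⟨g, hg⟩ := exists_perm_eqOn S (J e) φ
    (fun x hx y hy hxy => by
      replace hx := Finset.mem_coe.1 hx
      replace hy := Finset.mem_coe.1 hy
      simp only [φ] at hxy
      rw [dif_pos hx, dif_pos hy] at hxy
      simpa using eqv.injective (Subtype.ext hxy))
    (fun z hz => by simp only [φ]; rw [dif_pos hz]; exact (eqv ⟨z, hz⟩).2) hS
  refine ⟨ofPerm g⁻¹ * e * ofPerm g, ⟨g, rfl⟩, fun z hz => ?_⟩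
  have h1 : g z ∈ J e := by rw [hg z hz]; simp only [φ]; rw [dif_pos hz]; exact (eqv ⟨z, hz⟩).2
  show g⁻¹ (e (g z)) = z
  rw [mem_J.1 h1]
  simp

/-- Realize a single move `a ↦ b` (identity elsewhere on `S`) by a conjugate of `e`,
where `u` is a non-fixed point with `e u = w` a fixed point. -/
lemma realize_move {u w : Fin n} (hu : e u = w) (huw : u ≠ w) (hw : e w = w)
    (S : Finset (Fin n)) (hS : S.card = (J e).card) (a b : Fin n)
    (ha : a ∈ S) (hb : b ∉ S) :
    ∃ f ∈ conjClass e, (∀ z ∈ S, z ≠ a → f z = z) ∧ f a = b := by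
  classical
  have hunJ : u ∉ J e := fun h => huw (by rw [← hu, mem_J.1 h])
  have hwJ : w ∈ J e := mem_J.2 hw
  have hcard' : (S.erase a).card = ((J e).erase w).card := by
    rw [Finset.card_erase_of_mem ha, Finset.card_erase_of_mem hwJ, hS]
  let eqv := Finset.equivOfCardEq hcard'
  let φ : Fin n → Fin n := fun z =>
    if z = a then u else if z = b then w else if h : z ∈ S.erase a then (eqv ⟨z, h⟩ : Fin n) else z
  have hab : a ≠ b := fun h => hb (h ▸ ha)
  have hφa : φ a = u := by simp [φ]
  have hφb : φ b = w := by simp [φ, hab.symm]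
  have hφz : ∀ z ∈ S, z ≠ a → φ z ∈ (J e).erase w := by
    intro z hz hza
    have hzb : z ≠ b := fun h => hb (h ▸ hz)
    have hmem : z ∈ S.erase a := Finset.mem_erase.2 ⟨hza, hz⟩
    simp only [φ, if_neg hza, if_neg hzb, dif_pos hmem]
    exact (eqv ⟨z, hmem⟩).2
  obtain ⟨g, hg⟩ := exists_perm_eqOn (insert b S) (insert u (J e)) φ
    (by
      intro x hx y hy hxy
      replace hx := Finset.mem_coe.1 hx
      replace hy := Finset.mem_coe.1 hy
      have key : ∀ z ∈ insert b S, φ z = u → z = a := by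
        intro z hz hzu
        by_contra hza
        rcases Finset.mem_insert.1 hz with h | h
        · rw [h, hφb] at hzu; exact hunJ (hzu ▸ hwJ)
        · have := hφz z h hza
          rw [hzu] at this
          exact hunJ (Finset.mem_of_mem_erase this)
      have keyw : ∀ z ∈ insert b S, φ z = w → z = b := by
        intro z hz hzw
        rcases Finset.mem_insert.1 hz with h | h
        · exact h
        · by_contra hzb
          by_cases hza : z = a
          · rw [hza, hφa] at hzw; exact huw hzw
          · have := hφz z h hza
            rw [hzw] at this
            exact (Finset.mem_erase.1 this).1 rfl
      by_cases hxa : x = a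
      · by_cases hya : y = a
        · rw [hxa, hya]
        · rw [hxa, hφa] at hxy
          exact absurd (key y hy hxy.symm) hya
      · by_cases hya : y = a
        · rw [hya, hφa] at hxy
          exact absurd (key x hx hxy) hxa
        · by_cases hxb : x = b
          · by_cases hyb : y = b
            · rw [hxb, hyb]
            · rw [hxb, hφb] at hxy
              exact absurd (keyw y hy hxy.symm) hyb
          · by_cases hyb : y = b
            · rw [hyb, hφb] at hxy
              exact absurd (keyw x hx hxy) hxb
            · have hx' : x ∈ S := by
                rcases Finset.mem_insert.1 hx with h | h; exact absurd h hxb; exact h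
              have hy' : y ∈ S := by
                rcases Finset.mem_insert.1 hy with h | h; exact absurd h hyb; exact h
              have hx2 : x ∈ S.erase a := Finset.mem_erase.2 ⟨hxa, hx'⟩
              have hy2 : y ∈ S.erase a := Finset.mem_erase.2 ⟨hya, hy'⟩
              simp only [φ, if_neg hxa, if_neg hxb, if_neg hya, if_neg hyb] at hxy
              rw [dif_pos hx2, dif_pos hy2] at hxy
              have := eqv.injective (Subtype.ext hxy)
              have := congrArg Subtype.val this
              simp only [Subtype.mk.injEq] at this ⊢
              simpa using this)
    (by
      intro z hz
      by_cases hza : z = a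
      · rw [hza, hφa]; exact Finset.mem_insert_self u _
      · rcases Finset.mem_insert.1 hz with h | h
        · rw [h, hφb]; exact Finset.mem_insert_of_mem hwJ
        · exact Finset.mem_insert_of_mem (Finset.mem_of_mem_erase (hφz z h hza)))
    (by rw [Finset.card_insert_of_notMem hb, Finset.card_insert_of_notMem hunJ, hS])
  have hgb : g b = w := by rw [hg b (Finset.mem_insert_self b S), hφb]
  refine ⟨ofPerm g⁻¹ * e * ofPerm g, ⟨g, rfl⟩, fun z hz hza => ?_, ?_⟩
  · have h1 : g z ∈ J e := by
      rw [hg z (Finset.mem_insert_of_mem hz)]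
      exact Finset.mem_of_mem_erase (hφz z hz hza)
    show g⁻¹ (e (g z)) = z
    rw [mem_J.1 h1]; simp
  · show g⁻¹ (e (g a)) = b
    rw [hg a (Finset.mem_insert_of_mem ha), hφa, hu, ← hgb]
    simp

lemma card_filter_comp (ρ : Equiv.Perm (Fin n)) (p : Fin n → Prop) [DecidablePred p] :
    (Finset.univ.filter fun z => p (ρ z)).card = (Finset.univ.filter p).card := by
  classical
  apply Finset.card_bij (fun z _ => ρ z)
  · intro a ha; simp only [Finset.mem_filter, Finset.mem_univ, true_and] at ha ⊢; exact ha
  · intro a _ b _ hab; exact ρ.injective hab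
  · intro b hb
    refine ⟨ρ⁻¹ b, ?_, by simp⟩
    simp only [Finset.mem_filter, Finset.mem_univ, true_and] at hb ⊢
    simpa using hb

lemma swap_id3 (x y z : Fin n) (hxy : x ≠ y) (hxz : x ≠ z) (hyz : y ≠ z) :
    Equiv.swap x z * Equiv.swap x y * Equiv.swap y z = Equiv.swap x y := by
  ext a
  simp only [Equiv.Perm.mul_apply, Equiv.swap_apply_def]
  split_ifs <;> simp_all

/-- Realize the restriction of a transposition to the relevant set by a conjugate of `e`,
provided not both endpoints land in the fixed-point set. -/
lemma realizeSwap {u w : Fin n} (hu : e u = w) (huw : u ≠ w) (hw : e w = w)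
    (π : Equiv.Perm (Fin n)) (a b : Fin n)
    (hcond : ¬(e (π a) = π a ∧ e (π b) = π b)) :
    ∃ f ∈ conjClass e, ∀ z, e (π (Equiv.swap a b z)) = π (Equiv.swap a b z) →
      f z = Equiv.swap a b z := by
  classical
  set S : Finset (Fin n) :=
    Finset.univ.filter (fun z => e (π (Equiv.swap a b z)) = π (Equiv.swap a b z)) with hSdef
  have hS : S.card = (J e).card := by
    have h1 : S.card = (Finset.univ.filter fun t => e (π t) = π t).card :=
      card_filter_comp (Equiv.swap a b) (fun t => e (π t) = π t)
    have h2 : (Finset.univ.filter fun t => e (π t) = π t).card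
        = (Finset.univ.filter fun t => e t = t).card := by convert card_filter_comp π (fun t => e t = t)
    rw [h1, h2]; rfl
  have hmemS : ∀ z, z ∈ S ↔ e (π (Equiv.swap a b z)) = π (Equiv.swap a b z) := by
    intro z; simp [hSdef]
  have haS : a ∈ S ↔ e (π b) = π b := by rw [hmemS]; rw [Equiv.swap_apply_left]
  have hbS : b ∈ S ↔ e (π a) = π a := by rw [hmemS]; rw [Equiv.swap_apply_right]
  by_cases hDa : e (π a) = π a
  · have hDb : ¬ e (π b) = π b := fun h => hcond ⟨hDa, h⟩
    obtain ⟨f, hfC, hf1, hf2⟩ :=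
      realize_move hu huw hw S hS b a (hbS.2 hDa) (fun h => hDb (haS.1 h))
    refine ⟨f, hfC, fun z hz => ?_⟩
    have hzS : z ∈ S := (hmemS z).2 hz
    by_cases hzb : z = b
    · rw [hzb, Equiv.swap_apply_right]; exact hf2
    · have hza : z ≠ a := fun h => (fun hh => hDb (haS.1 hh)) (h ▸ hzS)
      rw [Equiv.swap_apply_of_ne_of_ne hza hzb]
      exact hf1 z hzS hzb
  · by_cases hDb : e (π b) = π b
    · obtain ⟨f, hfC, hf1, hf2⟩ :=
        realize_move hu huw hw S hS a b (haS.2 hDb) (fun h => hDa (hbS.1 h))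
      refine ⟨f, hfC, fun z hz => ?_⟩
      have hzS : z ∈ S := (hmemS z).2 hz
      by_cases hza : z = a
      · rw [hza, Equiv.swap_apply_left]; exact hf2
      · have hzb : z ≠ b := fun h => (fun hh => hDa (hbS.1 hh)) (h ▸ hzS)
        rw [Equiv.swap_apply_of_ne_of_ne hza hzb]
        exact hf1 z hzS hza
    · obtain ⟨f, hfC, hf⟩ := realize_id S hS
      refine ⟨f, hfC, fun z hz => ?_⟩
      have hzS : z ∈ S := (hmemS z).2 hz
      have hza : z ≠ a := fun h => hDb ((haS.1 (h ▸ hzS)))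
      have hzb : z ≠ b := fun h => hDa ((hbS.1 (h ▸ hzS)))
      rw [Equiv.swap_apply_of_ne_of_ne hza hzb]
      exact hf z hzS

lemma stepM (π μ : Equiv.Perm (Fin n))
    (hc : ∃ c ∈ Subsemigroup.closure (conjClass e), ∀ z, e (π z) = π z → c z = π z)
    (hf : ∃ f ∈ conjClass e, ∀ z, e (π (μ z)) = π (μ z) → f z = μ z) :
    ∃ c ∈ Subsemigroup.closure (conjClass e),
      ∀ z, e ((π * μ) z) = (π * μ) z → c z = (π * μ) z := by
  obtain ⟨c, hcC, hcp⟩ := hc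
  obtain ⟨f, hfC, hfp⟩ := hf
  refine ⟨c * f, Subsemigroup.mul_mem _ hcC (Subsemigroup.subset_closure hfC), fun z hz => ?_⟩
  have hz' : e (π (μ z)) = π (μ z) := hz
  show c (f z) = π (μ z)
  rw [hfp z hz', hcp (μ z) hz']

/-- Key lemma: there is a product of conjugates of `e` agreeing with `σ`
on the preimage of the fixed-point set of `e`. -/
lemma M_all {u w : Fin n} (hu : e u = w) (huw : u ≠ w) (hw : e w = w)
    (σ : Equiv.Perm (Fin n)) :
    ∃ c ∈ Subsemigroup.closure (conjClass e), ∀ z, e (σ z) = σ z → c z = σ z := by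
  refine Equiv.Perm.swap_induction_on' σ
    ⟨e, Subsemigroup.subset_closure (self_mem_conjClass e), fun z hz => hz⟩ ?_
  intro π x y hxy hP
  by_cases hD : e (π x) = π x ∧ e (π y) = π y
  · -- both endpoints fixed: use the 3-swap trick
    set z := π⁻¹ u with hzdef
    have hπz : π z = u := π.apply_symm_apply u
    have hz : ¬ e (π z) = π z := by rw [hπz, hu]; exact fun hh => huw hh.symm
    have hzx : z ≠ x := fun h => hz (h ▸ hD.1)
    have hzy : z ≠ y := fun h => hz (h ▸ hD.2)
    have s1 := stepM π (Equiv.swap x z) hP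
      (realizeSwap hu huw hw π x z (fun h => hz h.2))
    have s2 := stepM (π * Equiv.swap x z) (Equiv.swap x y) s1
      (realizeSwap hu huw hw (π * Equiv.swap x z) x y
        (fun h => hz (by
          have : (π * Equiv.swap x z) x = π z := by
            rw [Equiv.Perm.mul_apply, Equiv.swap_apply_left]
          rw [this] at h; exact h.1)))
    have s3 := stepM (π * Equiv.swap x z * Equiv.swap x y) (Equiv.swap y z) s2
      (realizeSwap hu huw hw (π * Equiv.swap x z * Equiv.swap x y) y z
        (fun h => hz (by
          have : (π * Equiv.swap x z * Equiv.swap x y) y = π z := by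
            rw [Equiv.Perm.mul_apply, Equiv.Perm.mul_apply, Equiv.swap_apply_right,
              Equiv.swap_apply_left]
          rw [this] at h; exact h.1)))
    have hEq : π * Equiv.swap x z * Equiv.swap x y * Equiv.swap y z = π * Equiv.swap x y := by
      rw [mul_assoc, mul_assoc, ← mul_assoc (Equiv.swap x z),
        swap_id3 x y z hxy hzx.symm hzy.symm]
    rwa [hEq] at s3
  · exact stepM π (Equiv.swap x y) hP (realizeSwap hu huw hw π x y hD)

lemma e_mem_closure : e ∈ Subsemigroup.closure (conjClass e) :=
  Subsemigroup.subset_closure (self_mem_conjClass e)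

lemma e_mul_perm (he : e * e = e) {u w : Fin n} (hu : e u = w) (huw : u ≠ w) (hw : e w = w)
    (σ : Equiv.Perm (Fin n)) : e * ofPerm σ ∈ Subsemigroup.closure (conjClass e) := by
  obtain ⟨c, hcC, hc⟩ := M_all hu huw hw σ
  have hEq : e * ofPerm σ = e * c * (ofPerm σ⁻¹ * e * ofPerm σ) := by
    funext x
    show e (σ x) = e (c (σ⁻¹ (e (σ x))))
    have h1 : σ (σ⁻¹ (e (σ x))) = e (σ x) := σ.apply_symm_apply _
    have h2 : e (σ (σ⁻¹ (e (σ x)))) = σ (σ⁻¹ (e (σ x))) := by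
      rw [h1]; exact congrFun he (σ x)
    rw [hc _ h2, h1]
    exact (show e (e (σ x)) = e (σ x) from congrFun he (σ x)).symm
  rw [hEq]
  exact Subsemigroup.mul_mem _ (Subsemigroup.mul_mem _ e_mem_closure hcC)
    (Subsemigroup.subset_closure ⟨σ, rfl⟩)

lemma conj_mem (g : Equiv.Perm (Fin n)) {x : Tn n}
    (hx : x ∈ Subsemigroup.closure (conjClass e)) :
    ofPerm g⁻¹ * x * ofPerm g ∈ Subsemigroup.closure (conjClass e) := by
  induction hx using Subsemigroup.closure_induction with
  | mem y hy =>
    obtain ⟨g', rfl⟩ := hy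
    refine Subsemigroup.subset_closure ⟨g' * g, ?_⟩
    funext z
    show g⁻¹ ((g'⁻¹ : Equiv.Perm (Fin n)) (e (g' (g z)))) = (g' * g)⁻¹ (e ((g' * g) z))
    simp [Equiv.Perm.mul_apply]
  | mul a b _ _ ha hb =>
    have hEq : ofPerm g⁻¹ * (a * b) * ofPerm g
        = (ofPerm g⁻¹ * a * ofPerm g) * (ofPerm g⁻¹ * b * ofPerm g) := by
      funext z
      show g⁻¹ (a (b (g z))) = g⁻¹ (a (g (g⁻¹ (b (g z)))))
      rw [show g (g⁻¹ (b (g z))) = b (g z) from g.apply_symm_apply _]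
    rw [hEq]
    exact Subsemigroup.mul_mem _ ha hb

end Stmt15Aux

/-- For a singular idempotent `e` and permutations `h, g`, the product `h∘e∘g` lies in the
semigroup generated by the `S_n`-conjugates of `e`. -/
theorem stmt15 (n : ℕ) (e : Tn n) (he : e * e = e) (hs : ¬ Function.Bijective e)
    (h g : Equiv.Perm (Fin n)) :
    ofPerm h * e * ofPerm g ∈ Subsemigroup.closure (conjClass e) := by
  have hsur : ¬ Function.Surjective e := fun hsurj =>
    hs (Finite.surjective_iff_bijective.1 hsurj)
  unfold Function.Surjective at hsur
  push_neg at hsur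
  obtain ⟨u, hunr⟩ := hsur
  have hnu : e u ≠ u := hunr u
  have hu : e u = e u := rfl
  have hw : e (e u) = e u := congrFun he u
  have huw : u ≠ e u := fun hh => hnu hh.symm
  have key := Stmt15Aux.conj_mem (e := e) h⁻¹ (Stmt15Aux.e_mul_perm he hu huw hw (g * h))
  have hEq : ofPerm h * e * ofPerm g
      = ofPerm h⁻¹⁻¹ * (e * ofPerm (g * h)) * ofPerm h⁻¹ := by
    funext x
    show h (e (g x)) = (h⁻¹⁻¹ : Equiv.Perm (Fin n)) (e ((g * h) ((h⁻¹ : Equiv.Perm (Fin n)) x)))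
    simp [Equiv.Perm.mul_apply]
  rw [hEq]
  exact key
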